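/- If F is an indexed linear tree with c(F) = (0^j, α_1, ..., α_k) where all α_i > 0 and j ≥ 0, then the forest polynomial β_F equals the fundamental quasisymmetric polynomial F_α(x_1, ..., x_{k+j}) indexed by the composition α = (α_1,...,α_k). -/

import Mathlib

/-- Plane binary trees. `leaf` is a leaf, `node l r` an internal node. -/
inductive BT where
  | leaf : BT
  | node : BT → BT → BT
deriving DecidableEq

/-- Number of internal nodes. -/
def BT.size : BT → ℕ
  | .leaf => 0
  | .node l r => l.size + r.size + 1

/-- Multiset of values `ρ_F(v)` (canonical label of the leftmost descendant,
reached by following left edges) over the internal nodes of a tree whose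
inorder canonical labels start at `a`. -/
def BT.rhoMS : BT → ℤ → Multiset ℤ
  | .leaf, _ => 0
  | .node l r, a => a ::ₘ (l.rhoMS a + r.rhoMS (a + l.size + 1))

/-- Multiset of canonical labels of internal nodes whose left child is a leaf
("left support"). -/
def BT.lsuppMS : BT → ℤ → Multiset ℤ
  | .leaf, _ => 0
  | .node l r, a =>
      (if l = BT.leaf then ({a} : Multiset ℤ) else 0) + l.lsuppMS a
        + r.lsuppMS (a + l.size + 1)

/-- The flagged generating polynomial of a binary tree with inorder labels
starting at `a`, where every label is at least `lo` (lower bound transmitted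
from the parent), at most the `ρ`-value of the node, labels weakly increase
down left edges and strictly increase down right edges. The variables are
`x_1, x_2, …` (the variable `X 0` is unused). -/
noncomputable def BT.polyAux : BT → ℤ → ℕ → MvPolynomial ℕ ℚ
  | .leaf, _, _ => 1
  | .node l r, a, lo =>
      ∑ k ∈ Finset.Icc lo a.toNat,
        MvPolynomial.X k * l.polyAux a k * r.polyAux (a + l.size + 1) (k + 1)

/-- The forest polynomial of a single indexed tree with support starting at `a`. -/
noncomputable def BT.poly (t : BT) (a : ℤ) : MvPolynomial ℕ ℚ := t.polyAux a 1

/-- An indexed forest: a list of binary trees together with the starting points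
of their supports, the supports being maximal intervals (consecutive supports
leave a gap of at least one integer). -/
structure IndexedForest where
  trees : List (ℤ × BT)
  nonempty : ∀ p ∈ trees, p.2 ≠ BT.leaf
  gaps : trees.Chain' (fun p q => p.1 + (p.2.size : ℤ) + 1 ≤ q.1)

/-- The support of an indexed forest, as a set of integers. -/
def IndexedForest.Supp (F : IndexedForest) : Set ℤ :=
  {i | ∃ p ∈ F.trees, p.1 ≤ i ∧ i < p.1 + (p.2.size : ℤ)}

/-- The multiset of `ρ_F`-values of all internal nodes of `F`. -/
def IndexedForest.rhoMS (F : IndexedForest) : Multiset ℤ :=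
  (F.trees.map (fun p => p.2.rhoMS p.1)).sum

/-- The `ℕ`-vector `c(F)`: `c_i` counts internal nodes with `ρ_F`-value `i`. -/
def cOf (F : IndexedForest) : ℤ → ℕ := fun i => F.rhoMS.count i

/-- The multiset of left-support labels of `F`. -/
def IndexedForest.lsuppMS (F : IndexedForest) : Multiset ℤ :=
  (F.trees.map (fun p => p.2.lsuppMS p.1)).sum

/-- Forest polynomial of a list of located trees. -/
noncomputable def polyL (ts : List (ℤ × BT)) : MvPolynomial ℕ ℚ :=
  (ts.map (fun p => p.2.poly p.1)).prod

/-- The forest polynomial of an indexed forest. -/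
noncomputable def IndexedForest.poly (F : IndexedForest) : MvPolynomial ℕ ℚ :=
  polyL F.trees

/-- Number of internal nodes of a forest. -/
def IndexedForest.size (F : IndexedForest) : ℕ :=
  (F.trees.map (fun p => p.2.size)).sum

/-- A linear binary tree: the internal nodes form a path (every internal node
has at most one internal-node child). -/
def BT.linear : BT → Prop
  | .leaf => True
  | .node l r => (l = BT.leaf ∨ r = BT.leaf) ∧ l.linear ∧ r.linear


/-- The (1-based) positions of the strict inequalities prescribed by a
composition `α`: its partial sums `α_1 + ⋯ + α_s`. -/
def psums (α : List ℕ) : List ℕ :=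
  (List.range α.length).map (fun s => (α.take (s + 1)).sum)

/-- Monomial-supporting sequences for the fundamental quasisymmetric polynomial
`F_α(x_1,…,x_n)`: weakly increasing sequences `1 ≤ i_1 ≤ ⋯ ≤ i_m ≤ n`
(`m = |α|`) with strict increase after each partial sum of `α`. -/
def fundSet (α : List ℕ) (n : ℕ) : Set (List ℕ) :=
  {L | L.length = α.sum ∧ (∀ x ∈ L, 1 ≤ x ∧ x ≤ n) ∧
    ∀ t, t + 1 < L.length →
      (L.getD t 0 ≤ L.getD (t + 1) 0 ∧
        ((t + 1) ∈ psums α → L.getD t 0 < L.getD (t + 1) 0))}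

/-- The fundamental quasisymmetric polynomial `F_α(x_1,…,x_n)`. -/
noncomputable def fundQ (α : List ℕ) (n : ℕ) : MvPolynomial ℕ ℚ :=
  ∑ᶠ L ∈ fundSet α n, (L.map (fun i => (MvPolynomial.X i : MvPolynomial ℕ ℚ))).prod

lemma psums_cons (a : ℕ) (l : List ℕ) :
    psums (a :: l) = a :: (psums l).map (fun v => a + v) := by
  unfold psums
  rw [List.length_cons, List.range_succ_eq_map, List.map_cons, List.map_map, List.map_map]
  simp [Function.comp, List.sum_cons]

lemma mem_psums_cons {a u : ℕ} {l : List ℕ} :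
    u ∈ psums (a :: l) ↔ u = a ∨ ∃ v ∈ psums l, u = a + v := by
  rw [psums_cons]
  simp only [List.mem_cons, List.mem_map]
  constructor
  · rintro (h | ⟨v, hv, h⟩)
    exacts [Or.inl h, Or.inr ⟨v, hv, h.symm⟩]
  · rintro (h | ⟨v, hv, h⟩)
    exacts [Or.inl h, Or.inr ⟨v, hv, h.symm⟩]

lemma psums_one {a : ℕ} {l : List ℕ} (ha : 1 ≤ a) :
    1 ∈ psums (a :: l) ↔ a = 1 := by
  rw [mem_psums_cons]
  constructor
  · rintro (h | ⟨v, hv, h⟩) <;> omega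
  · intro h; exact Or.inl h.symm

lemma psums_shift_one {t : ℕ} {l : List ℕ} :
    t + 2 ∈ psums (1 :: l) ↔ t + 1 ∈ psums l := by
  rw [mem_psums_cons]
  constructor
  · rintro (h | ⟨v, hv, h⟩)
    · omega
    · have : v = t + 1 := by omega
      rwa [← this]
  · intro h; exact Or.inr ⟨t + 1, h, by omega⟩

lemma psums_shift_ge {t a : ℕ} {l : List ℕ} (ha : 2 ≤ a) :
    t + 2 ∈ psums (a :: l) ↔ t + 1 ∈ psums ((a - 1) :: l) := by
  rw [mem_psums_cons, mem_psums_cons]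
  constructor
  · rintro (h | ⟨v, hv, h⟩)
    · exact Or.inl (by omega)
    · exact Or.inr ⟨v, hv, by omega⟩
  · rintro (h | ⟨v, hv, h⟩)
    · exact Or.inl (by omega)
    · exact Or.inr ⟨v, hv, by omega⟩

lemma chain_mono {L : List ℕ}
    (h : ∀ t, t + 1 < L.length → L.getD t 0 ≤ L.getD (t + 1) 0) :
    ∀ s t, s ≤ t → t < L.length → L.getD s 0 ≤ L.getD t 0 := by
  intro s t hst ht
  induction t with
  | zero => interval_cases s; rfl
  | succ t ih =>
    rcases Nat.eq_or_lt_of_le hst with h' | h'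
    · rw [h']
    · exact le_trans (ih (by omega) (by omega)) (h t ht)

lemma mem_iff_getD {L : List ℕ} {x : ℕ} :
    x ∈ L ↔ ∃ t, t < L.length ∧ L.getD t 0 = x := by
  rw [List.mem_iff_getElem]
  constructor
  · rintro ⟨t, ht, rfl⟩; exact ⟨t, ht, by rw [List.getD_eq_getElem _ _ ht]⟩
  · rintro ⟨t, ht, rfl⟩; exact ⟨t, ht, by rw [List.getD_eq_getElem _ _ ht]⟩


/-- Flagged fundamental set with a lower bound `lo` on all entries. -/
def FS (α : List ℕ) (n lo : ℕ) : Set (List ℕ) :=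
  {L | L ∈ fundSet α n ∧ ∀ x ∈ L, lo ≤ x}

lemma FS_nil (n lo : ℕ) : FS [] n lo = {[]} := by
  ext L
  simp only [FS, fundSet, Set.mem_setOf_eq, Set.mem_singleton_iff]
  constructor
  · rintro ⟨⟨hlen, _⟩, _⟩
    exact List.length_eq_zero_iff.mp (by simpa using hlen)
  · rintro rfl
    refine ⟨⟨by simp, by simp, ?_⟩, by simp⟩
    intro t ht; simp at ht

lemma mem_FS_cons {α₁ : ℕ} (hα₁ : 1 ≤ α₁) {rest : List ℕ} {n lo : ℕ} {L : List ℕ} :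
    L ∈ FS (α₁ :: rest) n lo ↔
      ∃ k L', L = k :: L' ∧ lo ≤ k ∧ 1 ≤ k ∧ k ≤ n ∧
        (if α₁ = 1 then L' ∈ FS rest n (k + 1) else L' ∈ FS ((α₁ - 1) :: rest) n k) := by
  constructor
  · rintro ⟨⟨hlen, hbd, hch⟩, hlo⟩
    match L, hlen with
    | [], hlen => simp at hlen; omega
    | k :: L', hlen =>
    rw [List.length_cons, List.sum_cons] at hlen
    refine ⟨k, L', rfl, hlo k (by simp), (hbd k (by simp)).1, (hbd k (by simp)).2, ?_⟩
    have hlen' : L'.length = (α₁ - 1) + rest.sum := by omega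
    -- chain for L'
    have hch' : ∀ t, t + 1 < L'.length → L'.getD t 0 ≤ L'.getD (t + 1) 0 := by
      intro t ht
      have := (hch (t + 1) (by simpa using Nat.succ_lt_succ ht)).1
      simpa using this
    -- lower bound for L' entries
    have hhead : ∀ x ∈ L', k + (if α₁ = 1 then 1 else 0) ≤ x := by
      intro x hx
      obtain ⟨t, ht, rfl⟩ := mem_iff_getD.mp hx
      have h0 : k + (if α₁ = 1 then 1 else 0) ≤ L'.getD 0 0 := by
        have h1 := hch 0 (by simp; omega)
        simp only [List.getD_cons_zero, List.getD_cons_succ] at h1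
        split
        · next h =>
          have := h1.2 ((psums_one hα₁).mpr h)
          omega
        · exact by omega
      exact le_trans h0 (chain_mono hch' 0 t (Nat.zero_le _) ht)
    have hbd' : ∀ x ∈ L', 1 ≤ x ∧ x ≤ n := fun x hx => hbd x (by simp [hx])
    split
    · next h1 =>
      subst h1
      refine ⟨⟨by omega, hbd', ?_⟩, by simpa using hhead⟩
      intro t ht
      have := hch (t + 1) (by simpa using Nat.succ_lt_succ ht)
      simp only [List.getD_cons_succ] at this
      exact ⟨this.1, fun hm => this.2 (psums_shift_one.mpr hm)⟩
    · next h1 =>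
      refine ⟨⟨by simp; omega, hbd', ?_⟩, by simpa [h1] using hhead⟩
      intro t ht
      have := hch (t + 1) (by simpa using Nat.succ_lt_succ ht)
      simp only [List.getD_cons_succ] at this
      exact ⟨this.1, fun hm => this.2 ((psums_shift_ge (by omega)).mpr hm)⟩
  · rintro ⟨k, L', rfl, hlok, hk1, hkn, hif⟩
    have hδ : L' ∈ FS (if α₁ = 1 then rest else (α₁ - 1) :: rest) n
        (k + (if α₁ = 1 then 1 else 0)) := by
      by_cases h1 : α₁ = 1 <;> simp only [h1, if_true, if_false] at hif ⊢ <;> exact hif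
    obtain ⟨⟨hlen', hbd', hch'⟩, hlo'⟩ := hδ
    have hδlen : L'.length = (α₁ - 1) + rest.sum := by
      by_cases h1 : α₁ = 1 <;> simp only [h1, if_true, if_false, List.sum_cons] at hlen' <;> omega
    have hheadk : 0 < L'.length → k + (if α₁ = 1 then 1 else 0) ≤ L'.getD 0 0 := by
      intro h
      exact hlo' _ (mem_iff_getD.mpr ⟨0, h, rfl⟩)
    refine ⟨⟨by simp; omega, ?_, ?_⟩, ?_⟩
    · rintro x hx
      rcases List.mem_cons.mp hx with rfl | hx
      · exact ⟨hk1, hkn⟩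
      · exact hbd' x hx
    · intro t ht
      match t with
      | 0 =>
        simp only [List.getD_cons_zero, List.getD_cons_succ]
        have h0 : 0 < L'.length := by simpa using ht
        have := hheadk h0
        constructor
        · omega
        · intro hm
          have ha1 := (psums_one hα₁).mp hm
          have h2 := hheadk h0
          rw [if_pos ha1] at h2
          omega
      | t + 1 =>
        simp only [List.getD_cons_succ]
        have ht' : t + 1 < L'.length := by simpa using ht
        have := hch' t ht'
        refine ⟨this.1, fun hm => this.2 ?_⟩
        by_cases h1 : α₁ = 1
        · subst h1; exact psums_shift_one.mp hm
        · have := (psums_shift_ge (a := α₁) (by omega)).mp hm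
          simpa [h1] using this
    · rintro x hx
      rcases List.mem_cons.mp hx with rfl | hx
      · exact hlok
      · have := hlo' x hx
        omega


noncomputable def mono (L : List ℕ) : MvPolynomial ℕ ℚ :=
  (L.map (fun i => (MvPolynomial.X i : MvPolynomial ℕ ℚ))).prod

lemma FS_finite : ∀ (N : ℕ) (α : List ℕ), α.sum ≤ N → (∀ x ∈ α, 0 < x) →
    ∀ n lo, (FS α n lo).Finite := by
  intro N
  induction N with
  | zero =>
    intro α hs hp n lo
    match α with
    | [] => rw [FS_nil]; exact Set.finite_singleton _
    | α₁ :: rest => have := hp α₁ (by simp); simp [List.sum_cons] at hs; omega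
  | succ N ih =>
    intro α hs hp n lo
    match α with
    | [] => rw [FS_nil]; exact Set.finite_singleton _
    | α₁ :: rest =>
      have hα₁ : 1 ≤ α₁ := hp _ (by simp)
      have hs' : α₁ + rest.sum ≤ N + 1 := by simpa using hs
      by_cases h1 : α₁ = 1
      · have hfinU : (⋃ k ∈ Set.Icc lo n, (fun L => k :: L) '' FS rest n (k + 1)).Finite :=
          (Set.finite_Icc lo n).biUnion
            (fun k _ => Set.Finite.image (fun L => k :: L) (ih rest (by omega)
              (fun x hx => hp x (by simp [hx])) n (k + 1)))
        refine Set.Finite.subset hfinU ?_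
        intro L hL
        obtain ⟨k, L', rfl, h2, h3, h4, h5⟩ := (mem_FS_cons hα₁).mp hL
        rw [if_pos h1] at h5
        simp only [Set.mem_iUnion, Set.mem_image, Set.mem_Icc]
        exact ⟨k, ⟨h2, h4⟩, L', h5, rfl⟩
      · have hfinU : (⋃ k ∈ Set.Icc lo n,
            (fun L => k :: L) '' FS ((α₁ - 1) :: rest) n k).Finite :=
          (Set.finite_Icc lo n).biUnion
            (fun k _ => Set.Finite.image (fun L => k :: L) (ih ((α₁ - 1) :: rest) (by simp; omega)
              (fun x hx => by
                rcases List.mem_cons.mp hx with rfl | hx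
                · omega
                · exact hp x (by simp [hx])) n k))
        refine Set.Finite.subset hfinU ?_
        intro L hL
        obtain ⟨k, L', rfl, h2, h3, h4, h5⟩ := (mem_FS_cons hα₁).mp hL
        rw [if_neg h1] at h5
        simp only [Set.mem_iUnion, Set.mem_image, Set.mem_Icc]
        exact ⟨k, ⟨h2, h4⟩, L', h5, rfl⟩

lemma FS_empty : ∀ (N : ℕ) (α : List ℕ), α.sum ≤ N → (∀ x ∈ α, 0 < x) → α ≠ [] →
    ∀ n lo, n + 1 < lo + α.length → FS α n lo = ∅ := by
  intro N
  induction N with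
  | zero =>
    intro α hs hp hne n lo hbd
    match α, hne with
    | α₁ :: rest, _ => have := hp α₁ (by simp); simp [List.sum_cons] at hs; omega
  | succ N ih =>
    intro α hs hp hne n lo hbd
    match α, hne with
    | α₁ :: rest, _ =>
    have hα₁ : 1 ≤ α₁ := hp _ (by simp)
    have hs' : α₁ + rest.sum ≤ N + 1 := by simpa using hs
    have hbd' : n + 1 < lo + rest.length + 1 := by simp at hbd; omega
    ext L
    simp only [Set.mem_empty_iff_false, iff_false]
    intro hL
    obtain ⟨k, L', rfl, h2, h3, h4, h5⟩ := (mem_FS_cons hα₁).mp hL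
    by_cases h1 : α₁ = 1
    · rw [if_pos h1] at h5
      cases rest with
      | nil => simp at hbd'; omega
      | cons b rest' =>
        rw [ih (b :: rest') (by simp at hs' ⊢; omega)
          (fun x hx => hp x (by simp at hx ⊢; tauto)) (by simp) n (k + 1)
          (by simp at hbd' ⊢; omega)] at h5
        exact h5
    · rw [if_neg h1] at h5
      rw [ih ((α₁ - 1) :: rest) (by simp at hs' ⊢; omega)
        (fun x hx => by
          rcases List.mem_cons.mp hx with rfl | hx
          · omega
          · exact hp x (by simp [hx])) (by simp) n k
        (by simp; omega)] at h5
      exact h5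

lemma FQhelper (β : List ℕ) (d n jj lo : ℕ) (hfin : ∀ m, (FS β n m).Finite)
    (hlo : 1 ≤ lo) (hjn : jj ≤ n) (S : Set (List ℕ))
    (hmem : ∀ L, L ∈ S ↔ ∃ k L', L = k :: L' ∧ lo ≤ k ∧ 1 ≤ k ∧ k ≤ n ∧ L' ∈ FS β n (k + d))
    (hempty : ∀ k, jj < k → k ≤ n → FS β n (k + d) = ∅) :
    ∑ᶠ L ∈ S, mono L =
      ∑ k ∈ Finset.Icc lo jj, MvPolynomial.X k * ∑ᶠ L ∈ FS β n (k + d), mono L := by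
  have hSeq : S = ↑((Finset.Icc lo jj).biUnion
      (fun k => ((hfin (k + d)).toFinset).image (k :: ·))) := by
    ext L
    rw [hmem]
    simp only [Finset.coe_biUnion, Finset.mem_coe, Finset.mem_Icc, Set.mem_iUnion,
      Set.mem_image, Finset.mem_image, Finset.mem_biUnion, Set.Finite.mem_toFinset]
    constructor
    · rintro ⟨k, L', rfl, h2, h3, h4, h5⟩
      have hk : k ≤ jj := by
        by_contra hgt
        rw [hempty k (by omega) h4] at h5
        exact h5
      exact ⟨k, ⟨h2, hk⟩, L', h5, rfl⟩
    · rintro ⟨k, ⟨h2, hk⟩, L', h5, rfl⟩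
      exact ⟨k, L', rfl, h2, by omega, by omega, h5⟩
  rw [hSeq, finsum_mem_coe_finset]
  rw [Finset.sum_biUnion ?disj]
  case disj =>
    intro x _ y _ hxy
    simp only [Function.onFun, Finset.disjoint_left, Finset.mem_image]
    rintro L ⟨L1, _, rfl⟩ ⟨L2, _, hL⟩
    injection hL with h h'
    exact hxy h.symm
  refine Finset.sum_congr rfl (fun k _ => ?_)
  rw [Finset.sum_image (by intro x _ y _ h; injection h)]
  have hx : (∑ᶠ L ∈ FS β n (k + d), mono L) = ∑ L ∈ (hfin (k + d)).toFinset, mono L := by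
    exact finsum_mem_eq_finite_toFinset_sum _ (hfin (k + d))
  rw [hx, Finset.mul_sum]
  refine Finset.sum_congr rfl (fun L' _ => ?_)
  simp [mono]


-- tree-side lemmas

lemma rho_lb : ∀ (t : BT) (a : ℤ), ∀ v ∈ t.rhoMS a, a ≤ v := by
  intro t
  induction t with
  | leaf => intro a v hv; simp [BT.rhoMS] at hv
  | node l r ihl ihr =>
    intro a v hv
    simp only [BT.rhoMS, Multiset.mem_cons, Multiset.mem_add] at hv
    rcases hv with rfl | hv | hv
    · exact le_rfl
    · exact ihl a v hv
    · have := ihr (a + l.size + 1) v hv; omega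

lemma rho_count_lt {t : BT} {a v : ℤ} (h : v < a) : (t.rhoMS a).count v = 0 :=
  Multiset.count_eq_zero.mpr (fun hm => absurd (rho_lb t a v hm) (by omega))

lemma rho_count_self {t : BT} (ht : t ≠ BT.leaf) (a : ℤ) : 1 ≤ (t.rhoMS a).count a := by
  match t, ht with
  | BT.node l r, _ =>
    simp only [BT.rhoMS, Multiset.count_cons_self]
    omega

theorem GEN : ∀ (t : BT), t.linear → ∀ (j lo : ℕ) (α : List ℕ), (∀ x ∈ α, 0 < x) →
    1 ≤ lo → lo ≤ j + 1 →
    (∀ i : ℕ, (t.rhoMS ((j : ℤ) + 1)).count ((i : ℤ) + 1)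
      = if i < j then 0 else α.getD (i - j) 0) →
    t.polyAux ((j : ℤ) + 1) lo = ∑ᶠ L ∈ FS α (j + α.length) lo, mono L := by
  intro t
  induction t with
  | leaf =>
    intro _ j lo α hα hlo1 hloj hc
    match α with
    | x :: rest =>
      have := hc j
      simp [BT.rhoMS] at this
      have := hα x (by simp)
      omega
    | [] =>
      rw [FS_nil]
      simp [BT.polyAux, mono, finsum_mem_singleton]
  | node l r ihl ihr =>
    intro hlin j lo α hα hlo1 hloj hc
    obtain ⟨hor, hllin, hrlin⟩ := hlin
    -- the root contributes one count at j+1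
    have hcj : ((BT.node l r).rhoMS ((j : ℤ) + 1)).count ((j : ℤ) + 1) = α.getD 0 0 := by
      simpa using hc j
    have hroot : 1 ≤ ((BT.node l r).rhoMS ((j : ℤ) + 1)).count ((j : ℤ) + 1) :=
      rho_count_self (by simp) _
    match α, hα with
    | [], hα => exfalso; rw [hcj] at hroot; simp at hroot
    | α₁ :: rest, hα =>
    have hα₁ : 1 ≤ α₁ := hα α₁ (by simp)
    have hcj' : ((BT.node l r).rhoMS ((j : ℤ) + 1)).count ((j : ℤ) + 1) = α₁ := by
      simpa using hcj
    by_cases hl : l = BT.leaf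
    · -- left child is a leaf: the chain continues to the right
      subst hl
      have hms : (BT.node BT.leaf r).rhoMS ((j : ℤ) + 1)
          = ((j : ℤ) + 1) ::ₘ r.rhoMS (((j + 1 : ℕ) : ℤ) + 1) := by
        have hcast : (j : ℤ) + 1 + 1 = ((j + 1 : ℕ) : ℤ) + 1 := by push_cast; ring
        simp only [BT.rhoMS, BT.size, Nat.cast_zero, add_zero, zero_add, hcast]
      have hcount_node : ∀ v : ℤ, ((BT.node BT.leaf r).rhoMS ((j : ℤ) + 1)).count v
          = (r.rhoMS (((j + 1 : ℕ) : ℤ) + 1)).count v + (if v = (j : ℤ) + 1 then 1 else 0) := by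
        intro v
        rw [hms, Multiset.count_cons]
      have hr0 : (r.rhoMS (((j + 1 : ℕ) : ℤ) + 1)).count ((j : ℤ) + 1) = 0 :=
        rho_count_lt (by push_cast; omega)
      have hα1eq : α₁ = 1 := by
        rw [hcount_node, hr0, if_pos rfl] at hcj'
        omega
      subst hα1eq
      have hcr : ∀ i : ℕ, (r.rhoMS (((j + 1 : ℕ) : ℤ) + 1)).count ((i : ℤ) + 1)
          = if i < j + 1 then 0 else rest.getD (i - (j + 1)) 0 := by
        intro i
        have hci := hc i
        rw [hcount_node] at hci
        by_cases hij : i < j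
        · rw [if_neg (by omega : ¬ ((i : ℤ) + 1 = (j : ℤ) + 1)), if_pos hij] at hci
          rw [if_pos (by omega)]
          omega
        · by_cases hij2 : i = j
          · subst hij2
            rw [if_pos (by omega)]
            exact hr0
          · rw [if_neg (by omega : ¬ ((i : ℤ) + 1 = (j : ℤ) + 1)), if_neg hij] at hci
            rw [if_neg (by omega)]
            have hgd : (1 :: rest).getD (i - j) 0 = rest.getD (i - (j + 1)) 0 := by
              rw [show i - j = (i - (j + 1)) + 1 by omega]
              simp
            omega
      -- apply FQhelper on the right-hand side
      have hparts : ∀ x ∈ rest, 0 < x := fun x hx => hα x (by simp [hx])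
      have hrhs : (∑ᶠ L ∈ FS (1 :: rest) (j + (1 :: rest).length) lo, mono L)
          = ∑ k ∈ Finset.Icc lo (j + 1), MvPolynomial.X k *
              ∑ᶠ L ∈ FS rest (j + rest.length + 1) (k + 1), mono L := by
        rw [show j + (1 :: rest).length = j + rest.length + 1 by simp only [List.length_cons]; omega]
        refine FQhelper rest 1 (j + rest.length + 1) (j + 1) lo
          (fun m => FS_finite rest.sum rest le_rfl hparts _ m) hlo1 (by omega) _ ?_ ?_
        · intro L
          rw [mem_FS_cons (le_refl 1)]
          simp
        · intro k hk hkn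
          match rest with
          | [] => simp at hkn; omega
          | b :: rest' =>
            exact FS_empty (b :: rest').sum _ le_rfl hparts (by simp) _ _
              (by simp at hkn ⊢; omega)
      rw [hrhs]
      -- unfold polyAux and match sums termwise
      simp only [BT.polyAux, BT.size, Nat.cast_zero, add_zero]
      rw [show ((j : ℤ) + 1).toNat = j + 1 by omega]
      refine Finset.sum_congr rfl (fun k hk => ?_)
      simp only [Finset.mem_Icc] at hk
      have hrec := ihr hrlin (j + 1) (k + 1) rest hparts (by omega) (by omega) hcr
      rw [show (j : ℤ) + 1 + 1 = ((j + 1 : ℕ) : ℤ) + 1 by push_cast; ring, hrec,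
        show j + 1 + rest.length = j + rest.length + 1 by omega]
      ring
    · -- right child is a leaf: the chain continues to the left
      have hr : r = BT.leaf := hor.resolve_left hl
      subst hr
      have hms : (BT.node l BT.leaf).rhoMS ((j : ℤ) + 1)
          = ((j : ℤ) + 1) ::ₘ l.rhoMS ((j : ℤ) + 1) := by
        simp [BT.rhoMS]
      have hcount_node : ∀ v : ℤ, ((BT.node l BT.leaf).rhoMS ((j : ℤ) + 1)).count v
          = (l.rhoMS ((j : ℤ) + 1)).count v + (if v = (j : ℤ) + 1 then 1 else 0) := by
        intro v
        rw [hms, Multiset.count_cons]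
      have hl1 : 1 ≤ (l.rhoMS ((j : ℤ) + 1)).count ((j : ℤ) + 1) := rho_count_self hl _
      have hα₁2 : 2 ≤ α₁ := by
        rw [hcount_node, if_pos rfl] at hcj'
        omega
      have hcl : ∀ i : ℕ, (l.rhoMS ((j : ℤ) + 1)).count ((i : ℤ) + 1)
          = if i < j then 0 else ((α₁ - 1) :: rest).getD (i - j) 0 := by
        intro i
        have hci := hc i
        rw [hcount_node] at hci
        by_cases hij : i < j
        · rw [if_neg (by omega : ¬ ((i : ℤ) + 1 = (j : ℤ) + 1)), if_pos hij] at hci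
          rw [if_pos hij]
          omega
        · rw [if_neg hij]
          by_cases hij2 : i = j
          · subst hij2
            rw [if_pos rfl, if_neg (by omega)] at hci
            simp only [Nat.sub_self, List.getD_cons_zero] at hci ⊢
            omega
          · rw [if_neg (by omega : ¬ ((i : ℤ) + 1 = (j : ℤ) + 1)), if_neg hij] at hci
            have hgd : (α₁ :: rest).getD (i - j) 0 = rest.getD (i - j - 1) 0 := by
              rw [show i - j = (i - j - 1) + 1 by omega]
              simp
            have hgd2 : ((α₁ - 1) :: rest).getD (i - j) 0 = rest.getD (i - j - 1) 0 := by
              rw [show i - j = (i - j - 1) + 1 by omega]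
              simp
            omega
      have hparts : ∀ x ∈ (α₁ - 1) :: rest, 0 < x := by
        intro x hx
        rcases List.mem_cons.mp hx with rfl | hx
        · omega
        · exact hα x (by simp [hx])
      have hrhs : (∑ᶠ L ∈ FS (α₁ :: rest) (j + (α₁ :: rest).length) lo, mono L)
          = ∑ k ∈ Finset.Icc lo (j + 1), MvPolynomial.X k *
              ∑ᶠ L ∈ FS ((α₁ - 1) :: rest) (j + rest.length + 1) (k + 0), mono L := by
        rw [show j + (α₁ :: rest).length = j + rest.length + 1 by simp only [List.length_cons]; omega]
        refine FQhelper ((α₁ - 1) :: rest) 0 (j + rest.length + 1) (j + 1) lo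
          (fun m => FS_finite ((α₁ - 1) :: rest).sum _ le_rfl hparts _ m) hlo1 (by omega) _ ?_ ?_
        · intro L
          rw [mem_FS_cons hα₁]
          simp only [Nat.add_zero]
          constructor
          · rintro ⟨k, L', h1, h2, h3, h4, h5⟩
            rw [if_neg (by omega)] at h5
            exact ⟨k, L', h1, h2, h3, h4, h5⟩
          · rintro ⟨k, L', h1, h2, h3, h4, h5⟩
            exact ⟨k, L', h1, h2, h3, h4, by rw [if_neg (by omega)]; exact h5⟩
        · intro k hk hkn
          exact FS_empty ((α₁ - 1) :: rest).sum _ le_rfl hparts (by simp) _ _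
            (by simp; omega)
      rw [hrhs]
      simp only [BT.polyAux]
      rw [show ((j : ℤ) + 1).toNat = j + 1 by omega]
      refine Finset.sum_congr rfl (fun k hk => ?_)
      simp only [Finset.mem_Icc] at hk
      have hrec := ihl hllin j k ((α₁ - 1) :: rest) hparts (by omega) (by omega) hcl
      rw [hrec, show j + ((α₁ - 1) :: rest).length = j + rest.length + 1 by simp only [List.length_cons]; omega]
      ring


/-- if `F` is an indexed linear tree with
`c(F) = (0^j, α_1, …, α_k)`, all `α_i > 0`, then
`β_F = F_α(x_1, …, x_{k+j})`. -/
theorem linear_tree_poly_is_fundamental (a : ℤ) (t : BT) (ht : t ≠ BT.leaf)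
    (hlin : t.linear) (F : IndexedForest) (hF : F.trees = [(a, t)])
    (hpos : ∀ i ∈ F.Supp, 1 ≤ i) (j : ℕ) (α : List ℕ) (hα : ∀ x ∈ α, 0 < x)
    (hc : ∀ i : ℕ, cOf F ((i : ℤ) + 1) = if i < j then 0 else α.getD (i - j) 0) :
    F.poly = fundQ α (α.length + j) := by
  have hrho : F.rhoMS = t.rhoMS a := by
    simp [IndexedForest.rhoMS, hF]
  have hcc : ∀ i : ℕ, (t.rhoMS a).count ((i : ℤ) + 1)
      = if i < j then 0 else α.getD (i - j) 0 := by
    intro i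
    have := hc i
    rwa [cOf, hrho] at this
  have hsz : 1 ≤ t.size := by
    match t, ht with
    | BT.node l r, _ => simp [BT.size]
  have ha1 : (1 : ℤ) ≤ a := by
    refine hpos a ⟨(a, t), by simp [hF], le_refl _, by push_cast; omega⟩
  have hroot := rho_count_self ht a
  obtain ⟨i0, hi0⟩ : ∃ i : ℕ, (i : ℤ) + 1 = a := ⟨(a - 1).toNat, by omega⟩
  have h1 := hcc i0
  rw [hi0] at h1
  have hnlt : ¬ i0 < j := by
    intro hlt
    rw [if_pos hlt] at h1
    omega
  have hgdpos : 0 < α.getD (i0 - j) 0 := by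
    rw [if_neg hnlt] at h1
    omega
  have hαne : α ≠ [] := by
    rintro rfl
    simp at hgdpos
  have hgd0 : 0 < α.getD 0 0 := by
    match α, hαne with
    | x :: rest, _ => exact hα x (by simp)
  have h2 : (t.rhoMS a).count ((j : ℤ) + 1) = α.getD 0 0 := by simpa using hcc j
  have hmem : ((j : ℤ) + 1) ∈ t.rhoMS a := by
    rw [← Multiset.count_pos, h2]
    exact hgd0
  have hle : a ≤ (j : ℤ) + 1 := rho_lb t a _ hmem
  have haeq : a = (j : ℤ) + 1 := by omega
  have hgen := GEN t hlin j 1 α hα le_rfl (by omega) (by rw [← haeq]; exact hcc)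
  have hpol : F.poly = t.polyAux a 1 := by
    simp [IndexedForest.poly, polyL, hF, BT.poly]
  rw [hpol, haeq, hgen]
  have hset : FS α (j + α.length) 1 = fundSet α (j + α.length) := by
    ext L
    constructor
    · rintro ⟨h, -⟩; exact h
    · intro h; exact ⟨h, fun x hx => (h.2.1 x hx).1⟩
  rw [hset, Nat.add_comm α.length j]
  rfl
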